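/- Fix δ ≠ 0, β ∈ ℝ, r > 0, and x = (x₁,x₂,x₃,x₄) ∈ ℝ⁴. Let r·x = (rx₁, rx₂, r²x₃, r³x₄) and let W_r be the dilation operator (W_rφ)(ξ) = r^{-1/2} φ(ξ/r). Then W_r⁻¹ ∘ π^{δ,β}(r·x) ∘ W_r = π^{r³δ, rβ}(x), as an identity of operators applied to any function φ : ℝ → ℂ pointwise. -/

import Mathlib

open Complex

/-- The generic representation π^{δ,β} of the Engel group acting on functions. -/
noncomputable def engelRep (δ β : ℝ) (x : ℝ × ℝ × ℝ × ℝ) (φ : ℝ → ℂ) : ℝ → ℂ :=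
  fun ξ =>
    Complex.exp (I * (δ : ℂ) *
        ((x.2.2.2 : ℂ) + (ξ : ℂ) * (x.2.2.1 : ℂ) + (1 / 2) * (x.1 : ℂ) * (x.2.2.1 : ℂ))) *
      Complex.exp (I * ((β : ℂ) + (δ : ℂ) / 2 * ((ξ : ℂ) + (x.1 : ℂ)) ^ 2) * (x.2.1 : ℂ)) *
      φ (ξ + x.1)

/-- The anisotropic dilations on the Engel group. -/
noncomputable def engelDil (r : ℝ) (x : ℝ × ℝ × ℝ × ℝ) : ℝ × ℝ × ℝ × ℝ :=
  (r * x.1, r * x.2.1, r ^ 2 * x.2.2.1, r ^ 3 * x.2.2.2)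

/-- The unitary dilation W_r on functions: (W_rφ)(ξ) = r^{-1/2} φ(ξ/r). -/
noncomputable def Wdil (r : ℝ) (φ : ℝ → ℂ) : ℝ → ℂ :=
  fun ξ => ((r ^ (-(1 : ℝ) / 2) : ℝ) : ℂ) * φ (ξ / r)

theorem stmt9 (δ β r : ℝ) (hδ : δ ≠ 0) (hr : 0 < r) (x : ℝ × ℝ × ℝ × ℝ)
    (φ : ℝ → ℂ) (ξ : ℝ) :
    Wdil r⁻¹ (engelRep δ β (engelDil r x) (Wdil r φ)) ξ =
      engelRep (r ^ 3 * δ) (r * β) x φ ξ := by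
  have hr0 : r ≠ 0 := hr.ne'
  have h1 : (r⁻¹ : ℝ) ^ (-(1:ℝ)/2) = (r : ℝ) ^ ((1:ℝ)/2) := by
    rw [← Real.rpow_neg_one r, ← Real.rpow_mul hr.le]; norm_num
  have h2 : ((r ^ (-(1:ℝ)/2) : ℝ) : ℂ) * ((r ^ ((1:ℝ)/2) : ℝ) : ℂ) = 1 := by
    rw [← Complex.ofReal_mul, ← Real.rpow_add hr]; norm_num
  have h4 : ξ / r⁻¹ = ξ * r := by field_simp
  have h3 : (ξ * r + r * x.1) / r = ξ + x.1 := by field_simp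
  simp only [Wdil, engelRep, engelDil, h1, h4, h3]
  have key :
      Complex.exp (I * (δ : ℂ) *
          (((r ^ 3 * x.2.2.2 : ℝ) : ℂ) + ((ξ * r : ℝ) : ℂ) * ((r ^ 2 * x.2.2.1 : ℝ) : ℂ) +
            (1 / 2) * ((r * x.1 : ℝ) : ℂ) * ((r ^ 2 * x.2.2.1 : ℝ) : ℂ))) *
        Complex.exp (I * ((β : ℂ) + (δ : ℂ) / 2 *
          (((ξ * r : ℝ) : ℂ) + ((r * x.1 : ℝ) : ℂ)) ^ 2) * ((r * x.2.1 : ℝ) : ℂ)) =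
      Complex.exp (I * ((r ^ 3 * δ : ℝ) : ℂ) *
          ((x.2.2.2 : ℂ) + (ξ : ℂ) * (x.2.2.1 : ℂ) + (1 / 2) * (x.1 : ℂ) * (x.2.2.1 : ℂ))) *
        Complex.exp (I * (((r * β : ℝ) : ℂ) + ((r ^ 3 * δ : ℝ) : ℂ) / 2 *
          ((ξ : ℂ) + (x.1 : ℂ)) ^ 2) * (x.2.1 : ℂ)) := by
    rw [← Complex.exp_add, ← Complex.exp_add]
    congr 1
    push_cast
    ring
  rw [key]
  linear_combination
    Complex.exp (I * ((r ^ 3 * δ : ℝ) : ℂ) *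
        ((x.2.2.2 : ℂ) + (ξ : ℂ) * (x.2.2.1 : ℂ) + (1 / 2) * (x.1 : ℂ) * (x.2.2.1 : ℂ))) *
      Complex.exp (I * (((r * β : ℝ) : ℂ) + ((r ^ 3 * δ : ℝ) : ℂ) / 2 *
        ((ξ : ℂ) + (x.1 : ℂ)) ^ 2) * (x.2.1 : ℂ)) * φ (ξ + x.1) * h2
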